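/- Let T be a pruned tree on a non-empty countable set A and let X be the set of infinite branches of T with its cylinder-set topology. For an arbitrary set H ⊆ X, the following are equivalent: (1) there exists a Cantor set C ⊆ X such that C ∩ H is meagre in C and dense in C; (2) there exists a Cantor set C ⊆ X such that C ∩ H is countable and dense in C. -/

import Mathlib

open Filter Topology

/-- The initial segment `(x₀, …, x_{n-1})` of an infinite sequence `x`. -/
def initSeg {β : Type*} (x : ℕ → β) (n : ℕ) : List β :=
  List.ofFn fun i : Fin n => x i

/-- `T` is a pruned tree on `A`: it contains the empty sequence, is closed under
prefixes, and every element has a proper extension in `T`. -/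
def IsPrunedTree {A : Type*} (T : Set (List A)) : Prop :=
  [] ∈ T ∧ (∀ s ∈ T, ∀ t : List A, t <+: s → t ∈ T) ∧ ∀ s ∈ T, ∃ a : A, s ++ [a] ∈ T

/-- The space `X` of infinite branches of the tree `T`, topologized as a subspace of
the product `ℕ → A` (with `A` discrete); this is exactly the cylinder-set topology. -/
abbrev Branches {A : Type*} (T : Set (List A)) : Type _ :=
  {x : ℕ → A // ∀ n : ℕ, initSeg x n ∈ T}

/-- The cylinder set `O(s)` of all branches with initial segment `s`. -/
def cyl {A : Type*} (T : Set (List A)) (s : List A) : Set (Branches T) :=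
  {x | initSeg x.val s.length = s}

/-- `f : X → ℝ` is a limsup function: there is `u` defined on finite sequences with
`f x = limsup_{t → ∞} u (x₀, …, x_t)` for every branch `x` (the limsup being computed
in the extended reals and required to equal the real number `f x`). -/
def IsLimsupFunction {A : Type*} {T : Set (List A)} (f : Branches T → ℝ) : Prop :=
  ∃ u : List A → ℝ, ∀ x : Branches T,
    (f x : EReal) = Filter.limsup (fun t : ℕ => (u (initSeg x.val (t + 1)) : EReal)) Filter.atTop

/-- `f` is of Baire class 1: a pointwise limit of continuous functions. -/
def BaireClassOne {X : Type*} [TopologicalSpace X] (f : X → ℝ) : Prop :=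
  ∃ g : ℕ → X → ℝ, (∀ n, Continuous (g n)) ∧
    ∀ x, Filter.Tendsto (fun n => g n x) Filter.atTop (nhds (f x))

/-- A Cantor set: a subset homeomorphic to the Cantor space `2^ℕ`. -/
def IsCantorSet {X : Type*} [TopologicalSpace X] (C : Set X) : Prop :=
  Nonempty (C ≃ₜ (ℕ → Bool))

/-- A Bernstein set: neither it nor its complement contains a nonempty perfect set. -/
def IsBernsteinSet {X : Type*} [TopologicalSpace X] (B : Set X) : Prop :=
  ∀ P : Set X, Perfect P → P.Nonempty → ¬ P ⊆ B ∧ ¬ P ⊆ Bᶜ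

/-- A co-analytic set: the complement of an analytic set. -/
def IsCoanalytic {X : Type*} [TopologicalSpace X] (s : Set X) : Prop :=
  MeasureTheory.AnalyticSet sᶜ

/-- The sequence of moves produced by Player I's strategy `σ` against the sequence `v`
of moves of Player II: Player I's `n`-th move depends on `(v₀, …, v_{n-1})`. -/
def playI {A M : Type*} (σ : List M → A) (v : ℕ → M) : ℕ → A :=
  fun n => σ (initSeg v n)

/-- Player II has a winning strategy in the game `Γ(f)`: a strategy for Player II assigns
to each position `(x₀, …, x_t)` of moves of Player I a real number `v_t` (Player II's own
previous moves being determined), and it is winning if for every run, i.e. every branch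
`x` that Player I may produce, `f x = limsup_{t → ∞} v_t`. -/
def PlayerIIWinsGamma {A : Type*} {T : Set (List A)} (f : Branches T → ℝ) : Prop :=
  ∃ τ : List A → ℝ, ∀ x : Branches T,
    (f x : EReal) = Filter.limsup (fun t : ℕ => (τ (initSeg x.val (t + 1)) : EReal)) Filter.atTop

/-- Player I has a winning strategy in the game `Γ_R(f)` where Player II's moves are
restricted to `R`: a strategy for Player I assigns to each position `(v₀, …, v_{n-1})` of
moves of Player II a point of `A`, and it is winning if against every sequence of moves
of Player II in `R` the moves of Player I are legal (all initial segments lie in `T`) and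
the resulting branch `x` satisfies `f x ≠ limsup_{t → ∞} v_t`. -/
def PlayerIWinsGammaR {A : Type*} {T : Set (List A)} (R : Set ℝ) (f : Branches T → ℝ) :
    Prop :=
  ∃ σ : List ℝ → A, ∀ v : ℕ → ℝ, (∀ t, v t ∈ R) →
    ∃ h : ∀ n : ℕ, initSeg (playI σ v) n ∈ T,
      (f ⟨playI σ v, h⟩ : EReal) ≠ Filter.limsup (fun t : ℕ => (v t : EReal)) Filter.atTop

/-- Player I has a winning strategy in the game `Γ(f)`. -/
def PlayerIWinsGamma {A : Type*} {T : Set (List A)} (f : Branches T → ℝ) : Prop :=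
  ∃ σ : List ℝ → A, ∀ v : ℕ → ℝ,
    ∃ h : ∀ n : ℕ, initSeg (playI σ v) n ∈ T,
      (f ⟨playI σ v, h⟩ : EReal) ≠ Filter.limsup (fun t : ℕ => (v t : EReal)) Filter.atTop

/-- Player II has a winning strategy in the game `Γ'(f)`, in which Player II's moves are
pairs `(v_t, w_t)` of reals and Player II wins a run iff
`f x = limsup_{t → ∞} v_t = liminf_{t → ∞} w_t`. -/
def PlayerIIWinsGamma' {A : Type*} {T : Set (List A)} (f : Branches T → ℝ) : Prop :=
  ∃ τ : List A → ℝ × ℝ, ∀ x : Branches T,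
    (f x : EReal) =
      Filter.limsup (fun t : ℕ => ((τ (initSeg x.val (t + 1))).1 : EReal)) Filter.atTop ∧
    (f x : EReal) =
      Filter.liminf (fun t : ℕ => ((τ (initSeg x.val (t + 1))).2 : EReal)) Filter.atTop

/-- Player I has a winning strategy in the game `Γ'(f)`. -/
def PlayerIWinsGamma' {A : Type*} {T : Set (List A)} (f : Branches T → ℝ) : Prop :=
  ∃ σ : List (ℝ × ℝ) → A, ∀ v : ℕ → ℝ × ℝ,
    ∃ h : ∀ n : ℕ, initSeg (playI σ v) n ∈ T,
      ¬ ((f ⟨playI σ v, h⟩ : EReal) =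
            Filter.limsup (fun t : ℕ => ((v t).1 : EReal)) Filter.atTop ∧
         (f ⟨playI σ v, h⟩ : EReal) =
            Filter.liminf (fun t : ℕ => ((v t).2 : EReal)) Filter.atTop)


namespace CantorAux

abbrev Y := ℕ → Bool

/-- cylinder given by a finite stem -/
def cylL (s : List Bool) : Set Y := {y | ∀ i, (h : i < s.length) → y i = s[i]}

def sg (x : Y) (n : ℕ) : List Bool := List.ofFn fun i : Fin n => x i

@[simp] lemma sg_length (x : Y) (n : ℕ) : (sg x n).length = n := by simp [sg]

lemma sg_getElem (x : Y) (n i : ℕ) (h : i < (sg x n).length) : (sg x n)[i] = x i := by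
  simp [sg]

lemma mem_cylL_sg (x : Y) (n : ℕ) : x ∈ cylL (sg x n) := by
  intro i h; rw [sg_getElem]

lemma mem_cylL_sg_iff {y x : Y} {n : ℕ} : y ∈ cylL (sg x n) ↔ ∀ i < n, y i = x i := by
  constructor
  · intro h i hi
    have := h i (by simpa using hi)
    rwa [sg_getElem] at this
  · intro h i hi
    rw [sg_getElem]
    exact h i (by simpa using hi)

lemma isOpen_cylL (s : List Bool) : IsOpen (cylL s) := by
  have : cylL s = ⋂ i : Fin s.length, (fun y : Y => y i.1) ⁻¹' {s[i.1]} := by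
    ext y
    simp only [Set.mem_iInter, Set.mem_preimage, Set.mem_singleton_iff]
    exact ⟨fun h i => h i.1 i.2, fun h i hi => h ⟨i, hi⟩⟩
  rw [this]
  exact isOpen_iInter_of_finite fun i =>
    (continuous_apply i.1).isOpen_preimage _ (isOpen_discrete _)

lemma cylL_nonempty (s : List Bool) : (cylL s).Nonempty := by
  refine ⟨fun i => if h : i < s.length then s[i] else false, fun i h => ?_⟩
  simp [h]

lemma cylL_anti {s t : List Bool} (h : s <+: t) : cylL t ⊆ cylL s := by
  intro y hy i hi
  rw [h.getElem hi]
  exact hy i (hi.trans_le h.length_le)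

/-- every open set contains a cylinder around each of its points -/
lemma exists_cyl_subset {U : Set Y} (hU : IsOpen U) {x : Y} (hx : x ∈ U) :
    ∃ n, ∀ y : Y, (∀ i < n, y i = x i) → y ∈ U := by
  have hU' : U ∈ nhds x := hU.mem_nhds hx
  rw [nhds_pi, Filter.mem_pi] at hU'
  obtain ⟨I, hIfin, t, ht, hsub⟩ := hU'
  obtain ⟨n, hn⟩ := hIfin.bddAbove
  refine ⟨n + 1, fun y hy => hsub fun i hi => ?_⟩
  have : y i = x i := hy i (Nat.lt_succ_of_le (hn hi))
  rw [this]
  exact mem_of_mem_nhds (ht i)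

lemma not_isOpen_singleton (y : Y) : ¬ IsOpen ({y} : Set Y) := by
  intro h
  obtain ⟨n, hn⟩ := exists_cyl_subset h rfl
  have : Function.update y n (!(y n)) ∈ ({y} : Set Y) := by
    refine hn _ fun i hi => ?_
    rw [Function.update_of_ne (by omega)]
  have := congrFun (Set.mem_singleton_iff.mp this) n
  simp at this


section Construction

variable (F : ℕ → Set Y) (Hs : Set Y)

/-- finite unions of the closed nowhere dense sets have dense complement -/
lemma dense_compl_union (hFc : ∀ n, IsClosed (F n)) (hFi : ∀ n, interior (F n) = ∅) (n : ℕ) :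
    Dense (⋃ i ∈ Finset.range (n + 1), F i)ᶜ := by
  induction n with
  | zero => simpa [interior_eq_empty_iff_dense_compl] using hFi 0
  | succ n ih =>
      have : (⋃ i ∈ Finset.range (n + 2), F i) =
          (⋃ i ∈ Finset.range (n + 1), F i) ∪ F (n + 1) := by
        rw [Finset.range_add_one]
        simp [Set.biUnion_insert, Set.union_comm]
      rw [this, Set.compl_union]
      refine Dense.inter_of_isOpen_left ih ?_ ?_
      · exact (by simpa [interior_eq_empty_iff_dense_compl] using hFi (n+1) : Dense (F (n+1))ᶜ)
      · exact isOpen_compl_iff.mpr (by exact isClosed_biUnion_finset fun i _ => hFc i)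

/-- The basic extension step. -/
lemma exists_step (hFc : ∀ n, IsClosed (F n)) (hFi : ∀ n, interior (F n) = ∅)
    (hHd : Dense Hs) (u : List Bool) (x : Y) (hx : x ∈ cylL u) (n : ℕ) :
    ∃ p : List Bool × List Bool × Y,
      u <+: p.1 ∧ u <+: p.2.1 ∧
      (n + 1 ≤ p.1.length ∧ u.length < p.1.length) ∧
      (n + 1 ≤ p.2.1.length ∧ u.length < p.2.1.length) ∧
      x ∈ cylL p.1 ∧
      (p.2.2 ∈ Hs ∧ p.2.2 ∈ cylL p.2.1) ∧
      (∀ y ∈ cylL p.1, y u.length = x u.length) ∧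
      (∀ y ∈ cylL p.2.1, y u.length = !(x u.length)) ∧
      (∀ y ∈ cylL p.2.1, ∀ i ≤ n, y ∉ F i) := by
  classical
  -- u0 : long initial segment of x
  set m := u.length + n + 1 with hm
  set u0 : List Bool := sg x m with hu0
  have hu0len : u0.length = m := by simp [hu0]
  have hpre : ∀ (v : List Bool) (z : Y), z ∈ cylL v → ∀ k, v.length ≤ k → v <+: sg z k := by
    intro v z hz k hk
    rw [List.prefix_iff_eq_take]
    apply List.ext_getElem
    · simp; omega
    · intro i h1 h2
      rw [List.getElem_take, sg_getElem]
      exact (hz i h1).symm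
  have hu0pre : u <+: u0 := hpre u x hx m (by omega)
  set b : Bool := !(x u.length) with hb
  have hGd := dense_compl_union F hFc hFi n
  obtain ⟨z, hzV, hzG⟩ := hGd.inter_open_nonempty _ (isOpen_cylL (u ++ [b])) (cylL_nonempty _)
  have hGopen : IsOpen (⋃ i ∈ Finset.range (n + 1), F i)ᶜ :=
    isOpen_compl_iff.mpr (isClosed_biUnion_finset fun i _ => hFc i)
  obtain ⟨k, hk⟩ := exists_cyl_subset hGopen hzG
  set M := max k m with hM
  set u1 : List Bool := sg z M with hu1
  have hzu : z ∈ cylL u := cylL_anti (by exact ⟨[b], rfl⟩) hzV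
  have hu1pre : u <+: u1 := hpre u z hzu M (by omega)
  obtain ⟨x1, hx1c, hx1H⟩ := hHd.inter_open_nonempty _ (isOpen_cylL u1) ⟨z, mem_cylL_sg z M⟩
  refine ⟨(u0, u1, x1), hu0pre, hu1pre, ⟨by simp [hu0, hm] <;> omega, by simp [hu0, hm] <;> omega⟩,
    ⟨by simp [hu1, hM, hm] <;> omega, by simp [hu1, hM, hm] <;> omega⟩, mem_cylL_sg x m, ⟨hx1H, hx1c⟩, ?_, ?_, ?_⟩
  · intro y hy
    have := hy u.length (by simp [hu0, hm] <;> omega)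
    rwa [sg_getElem] at this
  · intro y hy
    have h1 := hy u.length (by simp only [hu1, sg_length, hM, hm]; omega)
    rw [sg_getElem] at h1
    have h2 := hzV u.length (by simp)
    simp only [List.getElem_concat_length] at h2
    rw [h1, h2]
  · intro y hy i hi hyF
    have : y ∈ (⋃ i ∈ Finset.range (n + 1), F i)ᶜ := by
      apply hk
      intro j hj
      have := hy j (by simp only [hu1, sg_length, hM]; omega)
      rw [sg_getElem] at this
      exact this
    exact this (Set.mem_biUnion (Finset.mem_range.mpr (by omega)) hyF)

variable {F Hs} (hFc : ∀ n, IsClosed (F n)) (hFi : ∀ n, interior (F n) = ∅) (hHd : Dense Hs)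

/-- states of the construction: a stem together with a point in its cylinder -/
def St : Type := {q : List Bool × Y // q.2 ∈ cylL q.1}

noncomputable def step (st : St) (n : ℕ) (b : Bool) : St :=
  let e := exists_step F Hs hFc hFi hHd st.1.1 st.1.2 st.2 n
  if b then ⟨(e.choose.2.1, e.choose.2.2), e.choose_spec.2.2.2.2.2.1.2⟩
  else ⟨(e.choose.1, st.1.2), e.choose_spec.2.2.2.2.1⟩

noncomputable def node (x₀ : Y) (h₀ : x₀ ∈ Hs) : List Bool → St
  | [] => ⟨([], x₀), by intro i h; simp at h⟩
  | b :: t => step hFc hFi hHd (node x₀ h₀ t) t.length b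

variable (x₀ : Y) (h₀ : x₀ ∈ Hs)

local notation "nd" => node hFc hFi hHd x₀ h₀

lemma stem_prefix_step (st : St) (n : ℕ) (b : Bool) :
    st.1.1 <+: (step hFc hFi hHd st n b).1.1 := by
  unfold step
  cases b
  · simpa using (exists_step F Hs hFc hFi hHd st.1.1 st.1.2 st.2 n).choose_spec.1
  · simpa using (exists_step F Hs hFc hFi hHd st.1.1 st.1.2 st.2 n).choose_spec.2.1

lemma length_step (st : St) (n : ℕ) (b : Bool) :
    n + 1 ≤ (step hFc hFi hHd st n b).1.1.length ∧
    st.1.1.length < (step hFc hFi hHd st n b).1.1.length := by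
  unfold step
  cases b
  · simpa using (exists_step F Hs hFc hFi hHd st.1.1 st.1.2 st.2 n).choose_spec.2.2.1
  · simpa using (exists_step F Hs hFc hFi hHd st.1.1 st.1.2 st.2 n).choose_spec.2.2.2.1

lemma pnt_step_false (st : St) (n : ℕ) : (step hFc hFi hHd st n false).1.2 = st.1.2 := rfl

lemma pnt_step_true_mem (st : St) (n : ℕ) : (step hFc hFi hHd st n true).1.2 ∈ Hs :=
  (exists_step F Hs hFc hFi hHd st.1.1 st.1.2 st.2 n).choose_spec.2.2.2.2.2.1.1

lemma coord_step_false (st : St) (n : ℕ) :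
    ∀ y ∈ cylL (step hFc hFi hHd st n false).1.1, y st.1.1.length = st.1.2 st.1.1.length :=
  (exists_step F Hs hFc hFi hHd st.1.1 st.1.2 st.2 n).choose_spec.2.2.2.2.2.2.1

lemma coord_step_true (st : St) (n : ℕ) :
    ∀ y ∈ cylL (step hFc hFi hHd st n true).1.1, y st.1.1.length = !(st.1.2 st.1.1.length) :=
  (exists_step F Hs hFc hFi hHd st.1.1 st.1.2 st.2 n).choose_spec.2.2.2.2.2.2.2.1

lemma avoid_step_true (st : St) (n : ℕ) :
    ∀ y ∈ cylL (step hFc hFi hHd st n true).1.1, ∀ i ≤ n, y ∉ F i :=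
  (exists_step F Hs hFc hFi hHd st.1.1 st.1.2 st.2 n).choose_spec.2.2.2.2.2.2.2.2

lemma node_pnt_mem_Hs (t : List Bool) : (nd t).1.2 ∈ Hs := by
  induction t with
  | nil => exact h₀
  | cons b t ih =>
      cases b
      · rw [show nd (false :: t) = step hFc hFi hHd (nd t) t.length false from rfl,
          pnt_step_false]
        exact ih
      · exact pnt_step_true_mem hFc hFi hHd (nd t) t.length

lemma node_len (t : List Bool) : t.length ≤ (nd t).1.1.length := by
  cases t with
  | nil => simp
  | cons b t =>
      exact (length_step hFc hFi hHd (nd t) t.length b).1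

lemma node_prefix (l t : List Bool) : (nd t).1.1 <+: (nd (l ++ t)).1.1 := by
  induction l with
  | nil => exact List.prefix_rfl
  | cons b l ih =>
      exact ih.trans (stem_prefix_step hFc hFi hHd (nd (l ++ t)) (l ++ t).length b)

/-- reversed initial segment, the index of the node at depth `n` along branch `z` -/
def rsg (z : Y) (n : ℕ) : List Bool := (sg z n).reverse

@[simp] lemma rsg_length (z : Y) (n : ℕ) : (rsg z n).length = n := by simp [rsg]

lemma rsg_succ (z : Y) (n : ℕ) : rsg z (n + 1) = z n :: rsg z n := by
  unfold rsg sg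
  rw [List.ofFn_succ']
  simp [List.concat_eq_append]

lemma sg_congr {z w : Y} {n : ℕ} (h : ∀ i < n, z i = w i) : sg z n = sg w n := by
  apply List.ext_getElem (by simp)
  intro i h1 h2
  rw [sg_getElem, sg_getElem]
  exact h i (by simpa using h1)

lemma rsg_congr {z w : Y} {n : ℕ} (h : ∀ i < n, z i = w i) : rsg z n = rsg w n := by
  unfold rsg
  rw [sg_congr h]

lemma rsg_append {z : Y} {m n : ℕ} (h : m ≤ n) : ∃ l, rsg z n = l ++ rsg z m := by
  induction n, h using Nat.le_induction with
  | base => exact ⟨[], rfl⟩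
  | succ n hmn ih =>
      obtain ⟨l, hl⟩ := ih
      exact ⟨z n :: l, by rw [rsg_succ, hl]; rfl⟩

lemma stem_mono {z : Y} {m n : ℕ} (h : m ≤ n) :
    (nd (rsg z m)).1.1 <+: (nd (rsg z n)).1.1 := by
  obtain ⟨l, hl⟩ := rsg_append (z := z) h
  rw [hl]
  exact node_prefix hFc hFi hHd x₀ h₀ l (rsg z m)

noncomputable def Phi (z : Y) : Y := fun n =>
  ((nd (rsg z (n + 1))).1.1)[n]'(lt_of_lt_of_le (Nat.lt_succ_self n)
    (by simpa using node_len hFc hFi hHd x₀ h₀ (rsg z (n + 1))))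

lemma Phi_mem_cyl (z : Y) (n : ℕ) : Phi hFc hFi hHd x₀ h₀ z ∈ cylL (nd (rsg z n)).1.1 := by
  intro i hi
  unfold Phi
  rcases le_or_gt (i + 1) n with h | h
  · have hp := stem_mono hFc hFi hHd x₀ h₀ (z := z) h
    exact hp.getElem (lt_of_lt_of_le (Nat.lt_succ_self i)
      (by simpa using node_len hFc hFi hHd x₀ h₀ (rsg z (i + 1))))
  · have hp := stem_mono hFc hFi hHd x₀ h₀ (z := z) (show n ≤ i + 1 by omega)
    exact (hp.getElem hi).symm

lemma Phi_inj : Function.Injective (Phi hFc hFi hHd x₀ h₀) := by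
  intro z w hzw
  by_contra hne
  have hex : ∃ n, z n ≠ w n := Function.ne_iff.mp hne
  classical
  set n := Nat.find hex with hn
  have hmin : ∀ i < n, z i = w i := fun i hi => by
    by_contra hc; exact Nat.find_min hex hi hc
  have hdiff : z n ≠ w n := Nat.find_spec hex
  have ht : rsg z n = rsg w n := rsg_congr hmin
  set st := nd (rsg z n) with hst
  set L := st.1.1.length with hL
  have hz1 : Phi hFc hFi hHd x₀ h₀ z ∈ cylL (nd (z n :: rsg z n)).1.1 := by
    have := Phi_mem_cyl hFc hFi hHd x₀ h₀ z (n + 1)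
    rwa [rsg_succ] at this
  have hw1 : Phi hFc hFi hHd x₀ h₀ w ∈ cylL (nd (w n :: rsg w n)).1.1 := by
    have := Phi_mem_cyl hFc hFi hHd x₀ h₀ w (n + 1)
    rwa [rsg_succ] at this
  rw [← ht] at hw1
  have hcoord : ∀ b : Bool, ∀ y ∈ cylL (nd (b :: rsg z n)).1.1,
      y L = (if b then !(st.1.2 L) else st.1.2 L) := by
    intro b y hy
    have hnode : nd (b :: rsg z n) = step hFc hFi hHd st (rsg z n).length b := rfl
    cases b
    · simpa using coord_step_false hFc hFi hHd st (rsg z n).length y (by rwa [hnode] at hy)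
    · simpa using coord_step_true hFc hFi hHd st (rsg z n).length y (by rwa [hnode] at hy)
  have h1 := hcoord (z n) _ hz1
  have h2 := hcoord (w n) _ hw1
  rw [hzw] at h1
  rw [h1] at h2
  rcases Bool.eq_false_or_eq_true (z n) with hzn | hzn <;>
    rcases Bool.eq_false_or_eq_true (w n) with hwn | hwn <;>
      simp [hzn, hwn] at h2 hdiff <;> simp_all

lemma Phi_coord_congr {z w : Y} (n : ℕ) (h : ∀ i < n + 1, z i = w i) :
    Phi hFc hFi hHd x₀ h₀ z n = Phi hFc hFi hHd x₀ h₀ w n := by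
  unfold Phi
  congr 1
  rw [rsg_congr h]

lemma Phi_continuous : Continuous (Phi hFc hFi hHd x₀ h₀) := by
  apply continuous_pi
  intro n
  rw [continuous_def]
  intro s _
  rw [isOpen_iff_forall_mem_open]
  intro z hz
  refine ⟨{w : Y | ∀ i < n + 1, w i = z i}, ?_, ?_, fun i _ => rfl⟩
  · intro w hw
    have : Phi hFc hFi hHd x₀ h₀ w n = Phi hFc hFi hHd x₀ h₀ z n :=
      Phi_coord_congr hFc hFi hHd x₀ h₀ n hw
    simpa [Set.mem_preimage, this] using hz
  · have : {w : Y | ∀ i < n + 1, w i = z i} = cylL (sg z (n + 1)) := by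
      ext w
      rw [mem_cylL_sg_iff]
      exact Iff.rfl
    rw [this]; exact isOpen_cylL _

lemma Phi_eventually_false {z : Y} {m : ℕ} (hz : ∀ k, m ≤ k → z k = false) :
    Phi hFc hFi hHd x₀ h₀ z = (nd (rsg z m)).1.2 := by
  have hpnt : ∀ n, m ≤ n → (nd (rsg z n)).1.2 = (nd (rsg z m)).1.2 := by
    intro n hn
    induction n, hn using Nat.le_induction with
    | base => rfl
    | succ n hmn ih =>
        rw [rsg_succ, hz n hmn]
        rw [show nd (false :: rsg z n) = step hFc hFi hHd (nd (rsg z n)) (rsg z n).length false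
          from rfl, pnt_step_false]
        exact ih
  funext i
  set n := max m (i + 1) with hnn
  have h1 := Phi_mem_cyl hFc hFi hHd x₀ h₀ z n
  have h2 : (nd (rsg z n)).1.2 ∈ cylL (nd (rsg z n)).1.1 := (nd (rsg z n)).2
  have hlen : i < (nd (rsg z n)).1.1.length :=
    lt_of_lt_of_le (by omega : i < n) (by simpa using node_len hFc hFi hHd x₀ h₀ (rsg z n))
  have := (h1 i hlen).trans (h2 i hlen).symm
  rw [this, hpnt n (by omega)]

lemma Phi_not_mem_F {z : Y} (hz : ∀ m, ∃ k, m ≤ k ∧ z k = true) (i : ℕ) :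
    Phi hFc hFi hHd x₀ h₀ z ∉ F i := by
  obtain ⟨k, hik, hzk⟩ := hz i
  have h1 : Phi hFc hFi hHd x₀ h₀ z ∈ cylL (nd (true :: rsg z k)).1.1 := by
    have := Phi_mem_cyl hFc hFi hHd x₀ h₀ z (k + 1)
    rwa [rsg_succ, hzk] at this
  have := avoid_step_true hFc hFi hHd (nd (rsg z k)) (rsg z k).length _ h1 i (by simpa using hik)
  exact this

include hFc hFi hHd h₀ in
lemma construction_main (hHF : Hs ⊆ ⋃ i, F i) :
    ∃ K : Set Y, Nonempty (↥K ≃ₜ Y) ∧ (K ∩ Hs).Countable ∧ K ⊆ closure (K ∩ Hs) := by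
  classical
  set Φ := Phi hFc hFi hHd x₀ h₀ with hPhi
  set K := Set.range Φ with hK
  have hinj := Phi_inj hFc hFi hHd x₀ h₀
  have hcont := Phi_continuous hFc hFi hHd x₀ h₀
  have hbij : Function.Bijective (Set.rangeFactorization Φ) :=
    ⟨fun a b h => hinj (congrArg Subtype.val h), Set.rangeFactorization_surjective⟩
  have hcont' : Continuous (Set.rangeFactorization Φ) := hcont.subtype_mk _
  let ψ : Y ≃ₜ ↥K := Continuous.homeoOfEquivCompactToT2 (f := Equiv.ofBijective _ hbij) hcont'
  refine ⟨K, ⟨ψ.symm⟩, ?_, ?_⟩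
  · have hsub : K ∩ Hs ⊆ Set.range (fun t : List Bool => (nd t).1.2) := by
      rintro y ⟨⟨z, rfl⟩, hyH⟩
      by_cases hcase : ∀ m, ∃ k, m ≤ k ∧ z k = true
      · exfalso
        obtain ⟨i, hiF⟩ := Set.mem_iUnion.mp (hHF hyH)
        exact Phi_not_mem_F hFc hFi hHd x₀ h₀ hcase i hiF
      · push_neg at hcase
        obtain ⟨m, hm⟩ := hcase
        exact ⟨rsg z m, (Phi_eventually_false hFc hFi hHd x₀ h₀
          (fun k hk => by simpa using hm k hk)).symm⟩
    exact Set.Countable.mono hsub (Set.countable_range _)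
  · rintro y ⟨z, rfl⟩
    rw [mem_closure_iff]
    intro U hU hyU
    obtain ⟨n, hn⟩ := exists_cyl_subset hU hyU
    set z' : Y := fun i => if i < n then z i else false with hz'
    have hagree : ∀ i < n, z' i = z i := fun i hi => by simp [hz', hi]
    have hrsg : rsg z' n = rsg z n := rsg_congr hagree
    have hq : Φ z' = (nd (rsg z n)).1.2 := by
      have h := Phi_eventually_false hFc hFi hHd x₀ h₀ (z := z') (m := n)
        (fun k hk => by simp [hz']; omega)
      rw [← hrsg]; exact h
    have hlen : n ≤ (nd (rsg z n)).1.1.length := by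
      simpa using node_len hFc hFi hHd x₀ h₀ (rsg z n)
    have hmemz := Phi_mem_cyl hFc hFi hHd x₀ h₀ z n
    have hmemz' : Φ z' ∈ cylL (nd (rsg z n)).1.1 := by
      have := Phi_mem_cyl hFc hFi hHd x₀ h₀ z' n
      rwa [hrsg] at this
    refine ⟨Φ z', hn _ ?_, ⟨z', rfl⟩, ?_⟩
    · intro i hi
      have hi' : i < (nd (rsg z n)).1.1.length := lt_of_lt_of_le hi hlen
      exact (hmemz' i hi').trans (hmemz i hi').symm
    · rw [hq]; exact node_pnt_mem_Hs hFc hFi hHd x₀ h₀ (rsg z n)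

end Construction

/-- The key lemma in Cantor space: a dense meagre set can be "thinned" inside
a Cantor subset to become countable yet still dense. -/
lemma cantor_thinning {Hs : Set Y} (hHd : Dense Hs) (hm : IsMeagre Hs) :
    ∃ K : Set Y, Nonempty (↥K ≃ₜ Y) ∧ (K ∩ Hs).Countable ∧ K ⊆ closure (K ∩ Hs) := by
  obtain ⟨S, hSnd, hScnt, hSsub⟩ := isMeagre_iff_countable_union_isNowhereDense.mp hm
  rcases S.eq_empty_or_nonempty with hS | hS
  · exfalso
    rw [hS] at hSsub
    simp only [Set.sUnion_empty, Set.subset_empty_iff] at hSsub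
    obtain ⟨y, hy⟩ := hHd.nonempty
    rw [hSsub] at hy
    exact hy
  obtain ⟨f, hf⟩ := hScnt.exists_eq_range hS
  set F : ℕ → Set Y := fun n => closure (f n) with hF
  have hFc : ∀ n, IsClosed (F n) := fun n => isClosed_closure
  have hFi : ∀ n, interior (F n) = ∅ := by
    intro n
    have : IsNowhereDense (f n) := hSnd _ (by rw [hf]; exact ⟨n, rfl⟩)
    exact this
  have hHF : Hs ⊆ ⋃ i, F i := by
    intro y hy
    obtain ⟨t, htS, hyt⟩ := hSsub hy
    rw [hf] at htS
    obtain ⟨n, rfl⟩ := htS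
    exact Set.mem_iUnion.mpr ⟨n, subset_closure hyt⟩
  obtain ⟨x₀, h₀⟩ := hHd.nonempty
  exact construction_main hFc hFi hHd x₀ h₀ hHF

end CantorAux

/-- For an arbitrary set `H ⊆ X`: there is a Cantor set `C ⊆ X` such that `C ∩ H` is
meagre and dense in `C` if and only if there is a Cantor set `C ⊆ X` such that `C ∩ H` is
countable and dense in `C`. -/
theorem exists_cantor_meagre_dense_iff_countable_dense
    {A : Type*} [Countable A] [Nonempty A] [TopologicalSpace A] [DiscreteTopology A]
    {T : Set (List A)} (hT : IsPrunedTree T) (H : Set (Branches T)) :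
    (∃ C : Set (Branches T), IsCantorSet C ∧
        IsMeagre (Subtype.val ⁻¹' H : Set ↥C) ∧ Dense (Subtype.val ⁻¹' H : Set ↥C)) ↔
    (∃ C : Set (Branches T), IsCantorSet C ∧
        (C ∩ H).Countable ∧ Dense (Subtype.val ⁻¹' H : Set ↥C)) := by
  classical
  constructor
  · rintro ⟨C, ⟨e⟩, hmg, hdn⟩
    set s : Set ↥C := Subtype.val ⁻¹' H with hs
    have hHd' : Dense (⇑e '' s) := by
      rw [dense_iff_closure_eq, ← e.image_closure, hdn.closure_eq, Set.image_univ]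
      exact e.surjective.range_eq
    have hm' : IsMeagre (⇑e '' s) := by
      obtain ⟨S, hSnd, hScnt, hSsub⟩ := isMeagre_iff_countable_union_isNowhereDense.mp hmg
      refine isMeagre_iff_countable_union_isNowhereDense.mpr
        ⟨(fun t => ⇑e '' t) '' S, ?_, hScnt.image _, ?_⟩
      · rintro t ⟨t₀, ht₀, rfl⟩
        rw [IsNowhereDense, ← e.image_closure, ← Homeomorph.image_interior, hSnd t₀ ht₀,
          Set.image_empty]
      · rw [← Set.image_sUnion]
        exact Set.image_mono hSsub
    obtain ⟨K, ⟨ψ⟩, hcnt, hdns⟩ := CantorAux.cantor_thinning hHd' hm'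
    let j : ↥K → Branches T := fun k => ((e.symm k.1 : ↥C) : Branches T)
    have hjc : Continuous j :=
      continuous_subtype_val.comp (e.symm.continuous.comp continuous_subtype_val)
    have hji : Function.Injective j := fun a b hab =>
      Subtype.ext (e.symm.injective (Subtype.ext hab))
    haveI : CompactSpace ↥K := ψ.symm.compactSpace
    have hemb : IsClosedEmbedding j := hjc.isClosedEmbedding hji
    have hkey : ∀ k : ↥K, (j k ∈ H ↔ k.1 ∈ ⇑e '' s) := by
      intro k
      constructor
      · intro h
        exact ⟨e.symm k.1, h, by simp⟩
      · rintro ⟨c, hc, hck⟩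
        have hc' : e.symm k.1 = c := by rw [← hck]; simp
        show (e.symm k.1 : Branches T) ∈ H
        rw [hc']; exact hc
    have hpre : j ⁻¹' H = Subtype.val ⁻¹' (K ∩ ⇑e '' s) := by
      ext k
      simp only [Set.mem_preimage, Set.mem_inter_iff]
      exact ⟨fun h => ⟨k.2, (hkey k).mp h⟩, fun h => (hkey k).mpr h.2⟩
    refine ⟨Set.range j, ⟨hemb.toIsEmbedding.toHomeomorph.symm.trans ψ⟩, ?_, ?_⟩
    · have h4 : Set.range j ∩ H = j '' (j ⁻¹' H) := by
        rw [Set.image_preimage_eq_inter_range, Set.inter_comm]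
      rw [h4, hpre]
      exact (hcnt.preimage Subtype.val_injective).image j
    · intro x
      rw [closure_subtype]
      have himg : Subtype.val '' (Subtype.val ⁻¹' H : Set ↥(Set.range j)) = H ∩ Set.range j := by
        rw [Set.image_preimage_eq_inter_range, Subtype.range_coe]
      rw [himg]
      obtain ⟨k, hk⟩ := x.2
      rw [← hk]
      have h1 : (k : ↥K) ∈ closure (Subtype.val ⁻¹' (⇑e '' s) : Set ↥K) := by
        rw [closure_subtype]
        have h2 : Subtype.val '' (Subtype.val ⁻¹' (⇑e '' s) : Set ↥K) = K ∩ ⇑e '' s := by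
          rw [Set.image_preimage_eq_inter_range, Subtype.range_coe, Set.inter_comm]
        rw [h2]
        exact hdns k.2
      have h2 := (image_closure_subset_closure_image (s := (Subtype.val ⁻¹' (⇑e '' s) : Set ↥K)) hjc)
        (Set.mem_image_of_mem j h1)
      have h3 : j '' (Subtype.val ⁻¹' (⇑e '' s) : Set ↥K) ⊆ H ∩ Set.range j := by
        rintro y ⟨k', hk', rfl⟩
        exact ⟨(hkey k').mpr hk', Set.mem_range_self _⟩
      exact closure_mono h3 h2
  · rintro ⟨C, ⟨e⟩, hcnt, hdn⟩
    refine ⟨C, ⟨e⟩, ?_, hdn⟩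
    have hpreC : (Subtype.val ⁻¹' H : Set ↥C) = Subtype.val ⁻¹' (C ∩ H) := by
      ext x
      simp [x.2]
    have hcnt' : (Subtype.val ⁻¹' H : Set ↥C).Countable := by
      rw [hpreC]; exact hcnt.preimage Subtype.val_injective
    have hniso : ∀ p : ↥C, ¬ IsOpen ({p} : Set ↥C) := by
      intro p hp
      have h5 := (e.isOpen_image).mpr hp
      rw [Set.image_singleton] at h5
      exact CantorAux.not_isOpen_singleton _ h5
    refine isMeagre_iff_countable_union_isNowhereDense.mpr
      ⟨(fun p => ({p} : Set ↥C)) '' (Subtype.val ⁻¹' H), ?_, hcnt'.image _, ?_⟩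
    · rintro t ⟨p, -, rfl⟩
      rw [IsNowhereDense, closure_singleton]
      by_contra hne
      have hint : interior ({p} : Set ↥C) = {p} := by
        apply Set.Subset.antisymm interior_subset
        obtain ⟨q, hq⟩ := Set.nonempty_iff_ne_empty.mpr hne
        have hqp' : q ∈ ({p} : Set ↥C) := interior_subset hq
        have hqp : q = p := Set.mem_singleton_iff.mp hqp'
        intro r hr
        rw [Set.mem_singleton_iff] at hr
        subst hr
        rw [hqp] at hq
        exact hq
      exact hniso p (hint ▸ isOpen_interior)
    · intro p hp
      exact ⟨{p}, ⟨p, hp, rfl⟩, rfl⟩
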